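/- For every w ∈ ℂ, the function C_w is differentiable on ℝ and satisfies C_w′(u) = Ai(u) − w·C_w(u) for all u ∈ ℝ. -/

import Mathlib

open MeasureTheory

/-- The contour from `∞·e^{5iπ/6}` to `∞·e^{iπ/6}` passing through `−iM`:
`γ_M(r) = −iM + |r|·e^{5iπ/6}` for `r ≤ 0` and `γ_M(r) = −iM + r·e^{iπ/6}` for `r ≥ 0`. -/
noncomputable def airyContour (M : ℝ) (r : ℝ) : ℂ :=
  -Complex.I * (M : ℂ) +
    (if r ≤ 0 then ((-r : ℝ) : ℂ) * Complex.exp (Complex.I * (5 * (Real.pi : ℂ) / 6))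
     else ((r : ℝ) : ℂ) * Complex.exp (Complex.I * ((Real.pi : ℂ) / 6)))

/-- The derivative (velocity) of the contour `airyContour M`. -/
noncomputable def airyContourDeriv (r : ℝ) : ℂ :=
  if r ≤ 0 then -Complex.exp (Complex.I * (5 * (Real.pi : ℂ) / 6))
  else Complex.exp (Complex.I * ((Real.pi : ℂ) / 6))

/-- The Airy function `Ai(u) = (1/2π) ∫_Γ e^{i(ua + a³/3)} da` over the contour through `0`
from `∞·e^{5iπ/6}` to `∞·e^{iπ/6}`. -/
noncomputable def Airy (u : ℝ) : ℂ :=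
  (1 / (2 * Real.pi)) *
    ∫ r : ℝ, Complex.exp (Complex.I * ((u : ℂ) * airyContour 0 r + (airyContour 0 r) ^ 3 / 3)) *
      airyContourDeriv r

/-- `C_w(u) = (1/2π) ∫ e^{i(a³/3 + ua)}/(w + ia) da` over the contour through `−iM` with
`M = 2 + 2|w|`, so that the pole `a = iw` lies strictly above the contour. -/
noncomputable def CFun (w : ℂ) (u : ℝ) : ℂ :=
  (1 / (2 * Real.pi)) *
    ∫ r : ℝ,
      Complex.exp (Complex.I *
          ((airyContour (2 + 2 * ‖w‖) r) ^ 3 / 3 +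
            (u : ℂ) * airyContour (2 + 2 * ‖w‖) r)) /
        (w + Complex.I * airyContour (2 + 2 * ‖w‖) r) *
      airyContourDeriv r

noncomputable section AiryAux

open Complex Filter Set Topology Asymptotics

/-! ### Direction vectors -/

def eDir (r : ℝ) : ℂ :=
  if r ≤ 0 then Complex.exp (Complex.I * (5 * (Real.pi : ℂ) / 6))
  else Complex.exp (Complex.I * ((Real.pi : ℂ) / 6))

lemma eDir_rw (r : ℝ) :
    eDir r = Complex.exp ((((if r ≤ 0 then 5 * Real.pi / 6 else Real.pi / 6 : ℝ)) : ℂ) * Complex.I) := by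
  unfold eDir
  split <;> norm_num <;> ring_nf

lemma eDir_re_sq (r : ℝ) : (eDir r).re ^ 2 = 3/4 := by
  rw [eDir_rw, Complex.exp_ofReal_mul_I_re]
  split
  · have : (5 : ℝ) * Real.pi / 6 = Real.pi - Real.pi/6 := by ring
    rw [this, Real.cos_pi_sub, Real.cos_pi_div_six]
    rw [neg_pow]
    norm_num
    rw [div_pow, Real.sq_sqrt] <;> norm_num
  · rw [Real.cos_pi_div_six, div_pow, Real.sq_sqrt] <;> norm_num

lemma eDir_im (r : ℝ) : (eDir r).im = 1/2 := by
  rw [eDir_rw, Complex.exp_ofReal_mul_I_im]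
  split
  · have : (5 : ℝ) * Real.pi / 6 = Real.pi - Real.pi/6 := by ring
    rw [this, Real.sin_pi_sub, Real.sin_pi_div_six]
  · rw [Real.sin_pi_div_six]

lemma eDir_abs (r : ℝ) : ‖eDir r‖ = 1 := by
  rw [eDir_rw]; exact Complex.norm_exp_ofReal_mul_I _

lemma key_re (t u s : ℝ) (e : ℂ) (hx : e.re ^ 2 = 3/4) (hy : e.im = 1/2) :
    (Complex.I * (((s : ℂ) * e - Complex.I * t) ^ 3 / 3 + u * ((s : ℂ) * e - Complex.I * t))).re
      = -(s^3)/3 - t^3/3 + t*s^2/2 + t^2*s/2 - u*s/2 + u*t := by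
  have h3 : ((s : ℂ) * e - Complex.I * t) ^ 3
      = ((s:ℂ)*e)^3 - 3*((s:ℂ)*e)^2*(Complex.I*t) + 3*((s:ℂ)*e)*(Complex.I*t)^2 - (Complex.I*t)^3 := by
    ring
  simp only [h3, pow_succ, pow_zero, one_mul]
  simp only [Complex.div_ofNat_re, Complex.div_ofNat_im, Complex.mul_re, Complex.mul_im,
    Complex.add_re, Complex.add_im, Complex.sub_re, Complex.sub_im, Complex.I_re, Complex.I_im,
    Complex.ofReal_re, Complex.ofReal_im, Complex.re_ofNat, Complex.im_ofNat, hy]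
  linear_combination (s^2*t - s^3/2) * hx

/-! ### Integrability master lemmas -/

lemma tendsto_cube_exp (n : ℕ) (a b c : ℝ) :
    Tendsto (fun x : ℝ => (1+x)^n * Real.exp (-x^3/3 + a*x^2 + b*x + c)) atTop (𝓝 0) := by
  have h1 : Tendsto (fun x : ℝ => (1+x)^n * Real.exp (-(1+x))) atTop (𝓝 0) := by
    have := (Real.tendsto_pow_mul_exp_neg_atTop_nhds_zero n).comp
      (tendsto_atTop_add_const_left atTop 1 tendsto_id)
    exact this
  have hQ : Tendsto (fun x : ℝ => -x^3/3 + a*x^2 + b*x + c + (1+x)) atTop atBot := by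
    have hin : Tendsto (fun x : ℝ => x*(x*(x/3 - a) - (b+1)) - (c+1)) atTop atTop := by
      have t1 : Tendsto (fun x : ℝ => x/3 - a) atTop atTop := by
        apply tendsto_atTop_add_const_right
        exact tendsto_id.atTop_div_const (by norm_num)
      have t2 : Tendsto (fun x : ℝ => x*(x/3 - a) - (b+1)) atTop atTop := by
        apply tendsto_atTop_add_const_right
        exact Filter.Tendsto.atTop_mul_atTop₀ tendsto_id t1
      apply tendsto_atTop_add_const_right
      exact Filter.Tendsto.atTop_mul_atTop₀ tendsto_id t2
    have := (tendsto_neg_atTop_atBot).comp hin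
    apply this.congr
    intro x; simp only [Function.comp]; ring
  have h2 : Tendsto (fun x : ℝ => Real.exp (-x^3/3 + a*x^2 + b*x + c + (1+x))) atTop (𝓝 0) :=
    Real.tendsto_exp_atBot.comp hQ
  have := h1.mul h2
  rw [mul_zero] at this
  apply this.congr
  intro x
  rw [mul_assoc, ← Real.exp_add]
  ring_nf

def masterFun (n : ℕ) (a b c : ℝ) (r : ℝ) : ℝ :=
  (1+|r|)^n * Real.exp (-|r|^3/3 + a*r^2 + b*|r| + c)

lemma masterFun_continuous (n : ℕ) (a b c : ℝ) : Continuous (masterFun n a b c) := by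
  unfold masterFun
  apply Continuous.mul
  · exact (continuous_const.add _root_.continuous_abs).pow n
  · exact Real.continuous_exp.comp (by continuity)

lemma tendsto_masterFun_atTop (n : ℕ) (a b c : ℝ) :
    Tendsto (masterFun n a b c) atTop (𝓝 0) := by
  apply (tendsto_cube_exp n a b c).congr'
  filter_upwards [eventually_ge_atTop (0:ℝ)] with x hx
  unfold masterFun
  rw [_root_.abs_of_nonneg hx]

lemma masterFun_neg (n : ℕ) (a b c : ℝ) (r : ℝ) :
    masterFun n a b c (-r) = masterFun n a b c r := by
  unfold masterFun; rw [abs_neg, neg_pow]; ring_nf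

lemma tendsto_masterFun_atBot (n : ℕ) (a b c : ℝ) :
    Tendsto (masterFun n a b c) atBot (𝓝 0) := by
  have := (tendsto_masterFun_atTop n a b c).comp tendsto_neg_atBot_atTop
  apply this.congr
  intro x
  simp only [Function.comp]
  exact masterFun_neg n a b c x

lemma masterFun_integrable (n : ℕ) (a b c : ℝ) : Integrable (masterFun n a b c) := by
  set f := masterFun n a b c with hf
  have hcont := masterFun_continuous n a b c
  have hO : f =O[atTop] fun x => Real.exp (-1 * x) := by
    have ht : Tendsto (fun x : ℝ => f x * Real.exp x) atTop (𝓝 0) := by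
      have := tendsto_cube_exp n a (b+1) c
      apply this.congr'
      filter_upwards [eventually_ge_atTop (0:ℝ)] with x hx
      rw [hf]; unfold masterFun
      rw [_root_.abs_of_nonneg hx, mul_assoc, ← Real.exp_add]; ring_nf
    have h1 : (fun x : ℝ => f x * Real.exp x) =O[atTop] (fun _ => (1:ℝ)) := ht.isBigO_one ℝ
    have h2 := h1.mul (isBigO_refl (fun x : ℝ => Real.exp (-x)) atTop)
    apply h2.congr ?_ ?_
    · intro x; rw [mul_assoc, ← Real.exp_add]; simp
    · intro x; rw [one_mul]; ring_nf
  have hIoi : IntegrableOn f (Ioi 0) :=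
    integrable_of_isBigO_exp_neg one_pos hcont.continuousOn hO
  have hIic : IntegrableOn f (Iic 0) := by
    have heven : (f ∘ (fun x : ℝ => -x)) = f := by
      funext x; exact masterFun_neg n a b c x
    have h0 : IntegrableOn f (Ici 0) := (integrableOn_Ici_iff_integrableOn_Ioi).mpr hIoi
    have h1 := (MeasurePreserving.integrableOn_comp_preimage
      (Measure.measurePreserving_neg (volume : Measure ℝ))
      (Homeomorph.neg ℝ).measurableEmbedding (f := f) (s := Ici 0)).2 h0
    rw [heven] at h1
    have : (fun x : ℝ => -x) ⁻¹' (Ici 0) = Iic 0 := by ext x; simp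
    rwa [this] at h1
  rw [← integrableOn_univ, ← Set.Iic_union_Ioi (a := (0:ℝ))]
  exact hIic.union hIoi

end AiryAux

noncomputable section AiryAux2

open Complex Filter Set Topology Asymptotics

lemma airyContour_eq (M r : ℝ) :
    airyContour M r = ((|r| : ℝ) : ℂ) * eDir r - Complex.I * M := by
  unfold airyContour eDir
  split <;> rename_i h
  · rw [abs_of_nonpos h]; push_cast; ring
  · rw [abs_of_pos (lt_of_not_ge h)]; ring

lemma airyContourDeriv_eq (r : ℝ) :
    airyContourDeriv r = (if r ≤ 0 then (-1 : ℂ) else 1) * eDir r := by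
  unfold airyContourDeriv eDir
  split <;> ring

lemma abs_airyContourDeriv (r : ℝ) : ‖airyContourDeriv r‖ = 1 := by
  rw [airyContourDeriv_eq, norm_mul, eDir_abs, mul_one]
  split <;> simp

lemma continuous_airyContour (M : ℝ) : Continuous (airyContour M) := by
  unfold airyContour
  apply continuous_const.add
  apply Continuous.if
  · intro a ha
    have : a = 0 := by
      have := frontier_le_subset_eq (continuous_id) (continuous_const) ha
      simpa using this
    simp [this]
  · exact (Complex.continuous_ofReal.comp continuous_neg).mul continuous_const
  · exact (Complex.continuous_ofReal).mul continuous_const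

lemma measurable_airyContourDeriv : Measurable airyContourDeriv := by
  unfold airyContourDeriv
  exact Measurable.ite measurableSet_Iic measurable_const measurable_const

/-! ### Size estimates -/

lemma abs_exp_airy (M u : ℝ) (r : ℝ) :
    ‖Complex.exp (Complex.I * ((airyContour M r)^3/3 + (u:ℂ) * airyContour M r))‖
      = Real.exp (-(|r|^3)/3 - M^3/3 + M*|r|^2/2 + M^2*|r|/2 - u*|r|/2 + u*M) := by
  rw [Complex.norm_exp, airyContour_eq]
  congr 1
  exact key_re M u |r| (eDir r) (eDir_re_sq r) (eDir_im r)

/-- Uniform bound for the exponential factor, for contour heights `t` with `|t| ≤ T`. -/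
lemma abs_exp_airy_le (t u r T U : ℝ) (ht : |t| ≤ T) (hu : |u| ≤ U) :
    ‖Complex.exp (Complex.I * ((airyContour t r)^3/3 + (u:ℂ) * airyContour t r))‖
      ≤ Real.exp (-|r| ^ 3 / 3 + (T / 2) * r ^ 2 + ((T ^ 2 + U) / 2) * |r| + (U * T + T ^ 3 / 3)) := by
  rw [abs_exp_airy]
  apply Real.exp_le_exp.2
  have h1 : |r|^2 = r^2 := sq_abs r
  have hT : 0 ≤ T := le_trans (abs_nonneg t) ht
  have hU : 0 ≤ U := le_trans (abs_nonneg u) hu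
  have h2 : -t ≤ T := by have := neg_abs_le t; linarith
  have h3 : t ≤ T := le_trans (le_abs_self t) ht
  have h4 : -u ≤ U := by have := neg_abs_le u; linarith
  have h5 : u ≤ U := le_trans (le_abs_self u) hu
  have hr : 0 ≤ |r| := abs_nonneg r
  have hcube : -t^3 ≤ T^3 := by nlinarith [sq_nonneg (t - T), sq_nonneg (t + T)]
  have hsq : t^2 ≤ T^2 := by nlinarith
  have hut : u*t ≤ U*T := by nlinarith [abs_mul u t, le_abs_self (u*t), abs_nonneg (u*t)]
  nlinarith [mul_nonneg hr (sub_nonneg.2 hsq), sq_nonneg r,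
    mul_nonneg (sq_nonneg r) (sub_nonneg.2 h3)]

lemma abs_airyContour_le (M : ℝ) (r : ℝ) :
    ‖airyContour M r‖ ≤ (1 + |M|) * (1 + |r|) := by
  rw [airyContour_eq]
  calc ‖((|r| : ℝ) : ℂ) * eDir r - Complex.I * M‖
      ≤ ‖((|r| : ℝ) : ℂ) * eDir r‖ + ‖Complex.I * M‖ := by
        apply norm_sub_le
    _ ≤ |r| + |M| := by
        rw [norm_mul, norm_mul, eDir_abs, Complex.norm_I, Complex.norm_real, Complex.norm_real,
          Real.norm_eq_abs, Real.norm_eq_abs, _root_.abs_abs]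
        simp
    _ ≤ (1 + |M|) * (1 + |r|) := by nlinarith [abs_nonneg r, abs_nonneg M]

lemma pole_ge_one (w : ℂ) (r : ℝ) :
    1 ≤ ‖w + Complex.I * airyContour (2 + 2*‖w‖) r‖ := by
  set M := 2 + 2*‖w‖ with hM
  set γ := airyContour M r with hγ
  have hMpos : 0 ≤ M := by positivity
  have habsγ : 1 + ‖w‖ ≤ ‖γ‖ := by
    rcases le_or_gt |r| M with h | h
    · have him : γ.im = |r|/2 - M := by
        rw [hγ, airyContour_eq]
        simp [Complex.sub_im, Complex.mul_im, Complex.I_im, Complex.I_re, eDir_im]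
        ring
      have h2 : |γ.im| ≤ ‖γ‖ := Complex.abs_im_le_norm γ
      have h3 : M - |r|/2 ≤ |γ.im| := by
        calc M - |r|/2 ≤ |(M - |r|/2)| := le_abs_self _
          _ = |γ.im| := by rw [him, abs_sub_comm]
      have : 1 + ‖w‖ ≤ M - |r|/2 := by
        rw [hM]; have := abs_nonneg r; linarith
      linarith
    · have hre : γ.re = |r| * (eDir r).re := by
        rw [hγ, airyContour_eq]
        simp [Complex.sub_re, Complex.mul_re, Complex.I_re, Complex.I_im]
      have h2 : |γ.re| ≤ ‖γ‖ := Complex.abs_re_le_norm γ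
      have hesq : |(eDir r).re| ≥ 4/5 := by
        have := eDir_re_sq r
        nlinarith [abs_nonneg (eDir r).re, _root_.sq_abs (eDir r).re]
      have h3 : (4/5) * |r| ≤ |γ.re| := by
        rw [hre, abs_mul, _root_.abs_abs]
        nlinarith [abs_nonneg r]
      have : 1 + ‖w‖ ≤ (4/5) * |r| := by
        rw [hM] at h
        have := norm_nonneg w
        linarith
      linarith
  have htri : ‖γ‖ ≤ ‖w + Complex.I * γ‖ + ‖w‖ := by
    calc ‖γ‖ = ‖Complex.I * γ‖ := by
          rw [norm_mul, Complex.norm_I, one_mul]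
      _ = ‖(w + Complex.I * γ) - w‖ := by ring_nf
      _ ≤ _ := by apply norm_sub_le
  linarith

lemma pole_ne_zero (w : ℂ) (r : ℝ) :
    w + Complex.I * airyContour (2 + 2*‖w‖) r ≠ 0 := by
  intro h
  have := pole_ge_one w r
  rw [h] at this
  norm_num at this

/-! ### The integrands -/

/-- Integrand of `CFun`. -/
def Fint (w : ℂ) (u : ℝ) (r : ℝ) : ℂ :=
  Complex.exp (Complex.I *
      ((airyContour (2 + 2 * ‖w‖) r) ^ 3 / 3 +
        (u : ℂ) * airyContour (2 + 2 * ‖w‖) r)) /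
    (w + Complex.I * airyContour (2 + 2 * ‖w‖) r) *
  airyContourDeriv r

/-- Integrand of the Airy-type integral at the contour of height `t`. -/
def Gint (u : ℝ) (t : ℝ) (r : ℝ) : ℂ :=
  Complex.exp (Complex.I * ((airyContour t r) ^ 3 / 3 + (u : ℂ) * airyContour t r)) *
    airyContourDeriv r

/-- `r`-derivative of `r ↦ exp (i (γ_t(r)³/3 + u γ_t(r)))` (away from `r = 0`). -/
def Gd (u : ℝ) (t : ℝ) (r : ℝ) : ℂ :=
  Complex.I * ((airyContour t r) ^ 2 + (u : ℂ)) *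
    Complex.exp (Complex.I * ((airyContour t r) ^ 3 / 3 + (u : ℂ) * airyContour t r)) *
    airyContourDeriv r

lemma continuous_expPart (t : ℝ) (u : ℝ) :
    Continuous (fun r : ℝ =>
      Complex.exp (Complex.I * ((airyContour t r) ^ 3 / 3 + (u : ℂ) * airyContour t r))) := by
  have h := continuous_airyContour t
  exact Complex.continuous_exp.comp
    (continuous_const.mul (((h.pow 3).div_const 3).add (continuous_const.mul h)))

lemma aesm_Gint (u t : ℝ) : AEStronglyMeasurable (Gint u t) volume :=
  ((continuous_expPart t u).aestronglyMeasurable).mul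
    measurable_airyContourDeriv.aestronglyMeasurable

lemma aesm_Gd (u t : ℝ) : AEStronglyMeasurable (Gd u t) volume := by
  apply AEStronglyMeasurable.mul _ measurable_airyContourDeriv.aestronglyMeasurable
  apply AEStronglyMeasurable.mul _ (continuous_expPart t u).aestronglyMeasurable
  exact (continuous_const.mul (((continuous_airyContour t).pow 2).add
    continuous_const)).aestronglyMeasurable

lemma continuous_poleInv (w : ℂ) :
    Continuous (fun r : ℝ => (w + Complex.I * airyContour (2 + 2 * ‖w‖) r)⁻¹) := by
  apply Continuous.inv₀
  · exact continuous_const.add (continuous_const.mul (continuous_airyContour _))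
  · exact fun r => pole_ne_zero w r

lemma aesm_Fint (w : ℂ) (u : ℝ) : AEStronglyMeasurable (Fint w u) volume := by
  apply AEStronglyMeasurable.mul _ measurable_airyContourDeriv.aestronglyMeasurable
  have : Continuous (fun r : ℝ =>
      Complex.exp (Complex.I *
        ((airyContour (2 + 2 * ‖w‖) r) ^ 3 / 3 +
          (u : ℂ) * airyContour (2 + 2 * ‖w‖) r)) *
      (w + Complex.I * airyContour (2 + 2 * ‖w‖) r)⁻¹) :=
    (continuous_expPart _ u).mul (continuous_poleInv w)
  exact this.aestronglyMeasurable.congr (Filter.Eventually.of_forall fun r => by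
    simp only [div_eq_mul_inv])

lemma norm_Fint_le (w : ℂ) (u : ℝ) (r : ℝ) (U : ℝ) (hu : |u| ≤ U) :
    ‖Fint w u r‖ ≤ masterFun 0 ((2 + 2*‖w‖) / 2)
      (((2 + 2*‖w‖) ^ 2 + U) / 2) (U * (2 + 2*‖w‖) + (2 + 2*‖w‖) ^ 3 / 3) r := by
  set M := 2 + 2*‖w‖ with hM
  have hMnn : 0 ≤ M := by positivity
  unfold Fint masterFun
  rw [norm_mul, norm_div, abs_airyContourDeriv, mul_one, pow_zero, one_mul]
  have h1 := abs_exp_airy_le M u r M U (le_of_eq (_root_.abs_of_nonneg hMnn)) hu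
  have h2 := pole_ge_one w r
  calc ‖_‖ / ‖_‖
      ≤ ‖Complex.exp (Complex.I *
          ((airyContour M r) ^ 3 / 3 + (u : ℂ) * airyContour M r))‖ :=
        div_le_self (norm_nonneg _) h2
    _ ≤ _ := h1

lemma norm_Gint_le (u t r T U : ℝ) (ht : |t| ≤ T) (hu : |u| ≤ U) :
    ‖Gint u t r‖ ≤ masterFun 0 (T / 2) ((T ^ 2 + U) / 2) (U * T + T ^ 3 / 3) r := by
  unfold Gint masterFun
  rw [norm_mul, abs_airyContourDeriv, mul_one, pow_zero, one_mul]
  exact abs_exp_airy_le t u r T U ht hu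

lemma norm_Gd_le (u t r T U : ℝ) (ht : |t| ≤ T) (hu : |u| ≤ U) :
    ‖Gd u t r‖ ≤ ((1 + T)^2 + U) *
      masterFun 2 (T / 2) ((T ^ 2 + U) / 2) (U * T + T ^ 3 / 3) r := by
  have hT : 0 ≤ T := le_trans (abs_nonneg t) ht
  have hU : 0 ≤ U := le_trans (abs_nonneg u) hu
  unfold Gd masterFun
  rw [norm_mul, norm_mul, abs_airyContourDeriv, mul_one, norm_mul,
    Complex.norm_I, one_mul]
  have h1 := abs_exp_airy_le t u r T U ht hu
  have h2 : ‖(airyContour t r) ^ 2 + (u : ℂ)‖ ≤ ((1 + T)^2 + U) * (1 + |r|)^2 := by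
    calc ‖(airyContour t r) ^ 2 + (u : ℂ)‖
        ≤ ‖(airyContour t r) ^ 2‖ + ‖(u : ℂ)‖ := norm_add_le _ _
      _ ≤ ((1 + T) * (1 + |r|))^2 + U := by
          rw [norm_pow, Complex.norm_real, Real.norm_eq_abs]
          have h3 : ‖airyContour t r‖ ≤ (1 + T) * (1 + |r|) := by
            calc ‖airyContour t r‖ ≤ (1 + |t|) * (1 + |r|) :=
                  abs_airyContour_le t r
              _ ≤ (1 + T) * (1 + |r|) := by nlinarith [abs_nonneg r, abs_nonneg t]
          gcongr
      _ ≤ ((1 + T)^2 + U) * (1 + |r|)^2 := by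
          nlinarith [mul_nonneg hU (abs_nonneg r), mul_nonneg hU (sq_nonneg (|r|))]
  calc ‖_‖ * ‖_‖
      ≤ (((1 + T)^2 + U) * (1 + |r|)^2) * Real.exp (-|r| ^ 3 / 3 + T / 2 * r ^ 2 + (T ^ 2 + U) / 2 * |r| + (U * T + T ^ 3 / 3)) := by
        apply mul_le_mul h2 h1 (norm_nonneg _)
        positivity
    _ = _ := by ring

lemma integrable_Gint (u t : ℝ) : Integrable (Gint u t) :=
  (masterFun_integrable 0 _ _ _).mono' (aesm_Gint u t)
    (Filter.Eventually.of_forall fun r => norm_Gint_le u t r |t| |u| le_rfl le_rfl)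

lemma integrable_Gd (u t : ℝ) : Integrable (Gd u t) :=
  ((masterFun_integrable 2 _ _ _).const_mul _).mono' (aesm_Gd u t)
    (Filter.Eventually.of_forall fun r => norm_Gd_le u t r |t| |u| le_rfl le_rfl)

lemma integrable_Fint (w : ℂ) (u : ℝ) : Integrable (Fint w u) :=
  (masterFun_integrable 0 _ _ _).mono' (aesm_Fint w u)
    (Filter.Eventually.of_forall fun r => norm_Fint_le w u r |u| le_rfl)

/-- The `u`-derivative of the integrand of `CFun`. -/
def Fd (w : ℂ) (u : ℝ) (r : ℝ) : ℂ :=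
  Complex.I * airyContour (2 + 2 * ‖w‖) r * Fint w u r

lemma aesm_Fd (w : ℂ) (u : ℝ) : AEStronglyMeasurable (Fd w u) volume :=
  (continuous_const.mul (continuous_airyContour _)).aestronglyMeasurable.mul (aesm_Fint w u)

lemma norm_Fd_le (w : ℂ) (u : ℝ) (r : ℝ) (U : ℝ) (hu : |u| ≤ U) :
    ‖Fd w u r‖ ≤ (1 + (2 + 2*‖w‖)) *
      masterFun 1 ((2 + 2*‖w‖) / 2) (((2 + 2*‖w‖) ^ 2 + U) / 2)
        (U * (2 + 2*‖w‖) + (2 + 2*‖w‖) ^ 3 / 3) r := by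
  set M := 2 + 2*‖w‖ with hM
  have hMnn : 0 ≤ M := by positivity
  unfold Fd
  rw [norm_mul, norm_mul, Complex.norm_I, one_mul]
  have h1 : ‖airyContour M r‖ ≤ (1 + M) * (1 + |r|) := by
    have := abs_airyContour_le M r
    rwa [_root_.abs_of_nonneg hMnn] at this
  have h2 := norm_Fint_le w u r U hu
  have hmf : masterFun 1 (M/2) ((M^2+U)/2) (U*M + M^3/3) r
      = (1 + |r|) * masterFun 0 (M/2) ((M^2+U)/2) (U*M + M^3/3) r := by
    unfold masterFun; ring
  rw [hmf]
  calc ‖airyContour M r‖ * ‖Fint w u r‖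
      ≤ ((1 + M) * (1 + |r|)) * masterFun 0 (M/2) ((M^2+U)/2) (U*M + M^3/3) r := by
        apply mul_le_mul h1 h2 (norm_nonneg _)
        positivity
    _ = (1 + M) * ((1 + |r|) * masterFun 0 (M/2) ((M^2+U)/2) (U*M + M^3/3) r) := by ring

lemma integrable_Fd (w : ℂ) (u : ℝ) : Integrable (Fd w u) :=
  ((masterFun_integrable 1 _ _ _).const_mul _).mono' (aesm_Fd w u)
    (Filter.Eventually.of_forall fun r => norm_Fd_le w u r |u| le_rfl)

/-! ### Pointwise derivative computations -/

lemma hasDerivAt_p (u ζ : ℂ) :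
    HasDerivAt (fun ζ : ℂ => Complex.I * (ζ ^ 3 / 3 + u * ζ)) (Complex.I * (ζ ^ 2 + u)) ζ := by
  have h1 := ((hasDerivAt_pow 3 ζ).div_const 3).add ((hasDerivAt_id ζ).const_mul u)
  have h2 := h1.const_mul Complex.I
  refine h2.congr_deriv ?_
  push_cast; ring

/-- `u`-derivative of the `CFun` integrand. -/
lemma hasDerivAt_Fint (w : ℂ) (r : ℝ) (u : ℝ) :
    HasDerivAt (fun y : ℝ => Fint w y r) (Fd w u r) u := by
  set M := 2 + 2*‖w‖ with hM
  set γ := airyContour M r with hγ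
  set c := (w + Complex.I * γ)⁻¹ * airyContourDeriv r with hc
  have hz : HasDerivAt (fun z : ℂ => Complex.I * (γ ^ 3 / 3 + z * γ)) (Complex.I * γ) (u : ℂ) := by
    have h1 := ((hasDerivAt_id (u:ℂ)).mul_const γ).const_add (γ ^ 3 / 3)
    have h2 := h1.const_mul Complex.I
    refine h2.congr_deriv ?_
    ring
  have h3 := (hz.cexp.mul_const c).comp_ofReal
  have hfun : (fun y : ℝ => Fint w y r)
      = fun y : ℝ => Complex.exp (Complex.I * (γ ^ 3 / 3 + (y:ℂ) * γ)) * c := by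
    funext y
    unfold Fint
    rw [← hM, ← hγ, hc]
    ring
  rw [hfun]
  convert h3 using 1
  unfold Fd Fint
  rw [← hM, ← hγ, hc]
  ring

/-- `t`-derivative (contour height) of the Airy-type integrand. -/
lemma hasDerivAt_Gint_t (u r : ℝ) (t : ℝ) :
    HasDerivAt (fun t : ℝ => Gint u t r) (-Complex.I * Gd u t r) t := by
  set η := ((|r| : ℝ) : ℂ) * eDir r with hη
  set d := airyContourDeriv r with hd
  have hg : HasDerivAt (fun z : ℂ => η - Complex.I * z) (-Complex.I) (t : ℂ) := by
    have := ((hasDerivAt_id (t:ℂ)).const_mul Complex.I).const_sub η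
    simpa using this
  have hp := (hasDerivAt_p (u : ℂ) (η - Complex.I * t)).comp (t : ℂ) hg
  have h3 := (hp.cexp.mul_const d).comp_ofReal
  simp only [Function.comp] at h3
  have hfun : (fun t : ℝ => Gint u t r)
      = fun t : ℝ => Complex.exp (Complex.I * ((η - Complex.I * (t:ℂ)) ^ 3 / 3
          + (u:ℂ) * (η - Complex.I * (t:ℂ)))) * d := by
    funext t
    unfold Gint
    rw [airyContour_eq, ← hη, hd]
  rw [hfun]
  convert h3 using 1
  unfold Gd
  rw [airyContour_eq, ← hη, hd]
  ring

/-- `r`-derivative of `r ↦ exp (i (γ_t(r)³/3 + u γ_t(r)))` for `r > 0`. -/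
lemma hasDerivAt_expPart_pos (u t : ℝ) (r : ℝ) (hr : 0 < r) :
    HasDerivAt (fun r : ℝ =>
        Complex.exp (Complex.I * ((airyContour t r) ^ 3 / 3 + (u : ℂ) * airyContour t r)))
      (Gd u t r) r := by
  set E : ℂ := Complex.exp (Complex.I * ((Real.pi : ℂ) / 6)) with hE
  have hg : HasDerivAt (fun z : ℂ => -Complex.I * (t : ℂ) + z * E) E (r : ℂ) := by
    simpa using ((hasDerivAt_id (r:ℂ)).mul_const E).const_add (-Complex.I * (t:ℂ))
  have hp := (hasDerivAt_p (u : ℂ) (-Complex.I * (t:ℂ) + (r:ℂ) * E)).comp (r : ℂ) hg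
  have h3 := hp.cexp.comp_ofReal
  simp only [Function.comp] at h3
  have heq : ∀ x : ℝ, 0 < x → airyContour t x = -Complex.I * (t : ℂ) + (x : ℂ) * E := by
    intro x hx
    unfold airyContour
    rw [if_neg (not_le.2 hx), ← hE]
  have heqf : (fun x : ℝ =>
        Complex.exp (Complex.I * ((airyContour t x) ^ 3 / 3 + (u : ℂ) * airyContour t x)))
      =ᶠ[nhds r] (fun x : ℝ => Complex.exp (Complex.I *
        ((-Complex.I * (t:ℂ) + (x:ℂ) * E) ^ 3 / 3
          + (u:ℂ) * (-Complex.I * (t:ℂ) + (x:ℂ) * E)))) := by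
    filter_upwards [Ioi_mem_nhds hr] with x hx
    rw [heq x hx]
  have h4 := h3.congr_of_eventuallyEq heqf
  refine h4.congr_deriv ?_
  unfold Gd airyContourDeriv
  rw [if_neg (not_le.2 hr), heq r hr, ← hE]
  ring

/-- `r`-derivative of `r ↦ exp (i (γ_t(r)³/3 + u γ_t(r)))` for `r < 0`. -/
lemma hasDerivAt_expPart_neg (u t : ℝ) (r : ℝ) (hr : r < 0) :
    HasDerivAt (fun r : ℝ =>
        Complex.exp (Complex.I * ((airyContour t r) ^ 3 / 3 + (u : ℂ) * airyContour t r)))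
      (Gd u t r) r := by
  set E : ℂ := Complex.exp (Complex.I * (5 * (Real.pi : ℂ) / 6)) with hE
  have hg : HasDerivAt (fun z : ℂ => -Complex.I * (t : ℂ) + (-z) * E) (-E) (r : ℂ) := by
    have h0 : HasDerivAt (fun z : ℂ => -z * E) (-E) (r : ℂ) := by
      simpa using ((hasDerivAt_id (r:ℂ)).neg.mul_const E)
    simpa using h0.const_add (-Complex.I * (t:ℂ))
  have hp := (hasDerivAt_p (u : ℂ) (-Complex.I * (t:ℂ) + (-(r:ℂ)) * E)).comp (r : ℂ) hg
  have h3 := hp.cexp.comp_ofReal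
  simp only [Function.comp] at h3
  have heq : ∀ x : ℝ, x ≤ 0 → airyContour t x = -Complex.I * (t : ℂ) + (-(x:ℂ)) * E := by
    intro x hx
    unfold airyContour
    rw [if_pos hx, ← hE]
    push_cast
    ring
  have heqf : (fun x : ℝ =>
        Complex.exp (Complex.I * ((airyContour t x) ^ 3 / 3 + (u : ℂ) * airyContour t x)))
      =ᶠ[nhds r] (fun x : ℝ => Complex.exp (Complex.I *
        ((-Complex.I * (t:ℂ) + (-(x:ℂ)) * E) ^ 3 / 3
          + (u:ℂ) * (-Complex.I * (t:ℂ) + (-(x:ℂ)) * E)))) := by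
    filter_upwards [Iio_mem_nhds hr] with x hx
    rw [heq x (le_of_lt hx)]
  have h4 := h3.congr_of_eventuallyEq heqf
  refine h4.congr_deriv ?_
  unfold Gd airyContourDeriv
  rw [if_pos (le_of_lt hr), heq r (le_of_lt hr), ← hE]
  ring

/-! ### The integral of `Gd` vanishes (fundamental theorem of calculus) -/

lemma tendsto_expPart_atTop (u t : ℝ) :
    Filter.Tendsto (fun r : ℝ =>
      Complex.exp (Complex.I * ((airyContour t r) ^ 3 / 3 + (u : ℂ) * airyContour t r)))
      atTop (𝓝 0) := by
  have hb : ∀ r : ℝ, ‖Complex.exp (Complex.I *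
      ((airyContour t r) ^ 3 / 3 + (u : ℂ) * airyContour t r))‖
      ≤ masterFun 0 (|t|/2) ((|t| ^ 2 + |u|) / 2) (|u| * |t| + |t| ^ 3 / 3) r := by
    intro r
    unfold masterFun
    rw [pow_zero, one_mul]
    exact abs_exp_airy_le t u r |t| |u| le_rfl le_rfl
  exact squeeze_zero_norm hb (tendsto_masterFun_atTop 0 _ _ _)

lemma tendsto_expPart_atBot (u t : ℝ) :
    Filter.Tendsto (fun r : ℝ =>
      Complex.exp (Complex.I * ((airyContour t r) ^ 3 / 3 + (u : ℂ) * airyContour t r)))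
      atBot (𝓝 0) := by
  have hb : ∀ r : ℝ, ‖Complex.exp (Complex.I *
      ((airyContour t r) ^ 3 / 3 + (u : ℂ) * airyContour t r))‖
      ≤ masterFun 0 (|t|/2) ((|t| ^ 2 + |u|) / 2) (|u| * |t| + |t| ^ 3 / 3) r := by
    intro r
    unfold masterFun
    rw [pow_zero, one_mul]
    exact abs_exp_airy_le t u r |t| |u| le_rfl le_rfl
  exact squeeze_zero_norm hb (tendsto_masterFun_atBot 0 _ _ _)

lemma integral_Gd_eq_zero (u t : ℝ) : ∫ r : ℝ, Gd u t r = 0 := by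
  set h : ℝ → ℂ := fun r =>
    Complex.exp (Complex.I * ((airyContour t r) ^ 3 / 3 + (u : ℂ) * airyContour t r)) with hh
  have hcont : Continuous h := continuous_expPart t u
  have hint := integrable_Gd u t
  have hIic : ∫ r in Iic (0:ℝ), Gd u t r = h 0 - 0 :=
    integral_Iic_of_hasDerivAt_of_tendsto hcont.continuousWithinAt
      (fun x hx => hasDerivAt_expPart_neg u t x hx) hint.integrableOn
      (tendsto_expPart_atBot u t)
  have hIoi : ∫ r in Ioi (0:ℝ), Gd u t r = 0 - h 0 :=
    integral_Ioi_of_hasDerivAt_of_tendsto hcont.continuousWithinAt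
      (fun x hx => hasDerivAt_expPart_pos u t x hx) hint.integrableOn
      (tendsto_expPart_atTop u t)
  have hsum := intervalIntegral.integral_Iic_add_Ioi (b := (0:ℝ)) (μ := volume) hint.integrableOn hint.integrableOn
  rw [← hsum, hIic, hIoi]
  ring

/-! ### Contour shift -/

lemma hasDerivAt_integral_Gint (u : ℝ) (t : ℝ) :
    HasDerivAt (fun t : ℝ => ∫ r : ℝ, Gint u t r) 0 t := by
  have hbnd : ∀ r : ℝ, ∀ t' ∈ Metric.ball t 1,
      ‖-Complex.I * Gd u t' r‖ ≤ ((1 + (|t| + 1)) ^ 2 + |u|) *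
        masterFun 2 ((|t|+1)/2) (((|t| + 1) ^ 2 + |u|) / 2)
          (|u| * (|t| + 1) + (|t| + 1) ^ 3 / 3) r := by
    intro r t' ht'
    have ht'' : |t'| ≤ |t| + 1 := by
      rw [Metric.mem_ball, Real.dist_eq] at ht'
      have := abs_sub_abs_le_abs_sub t' t
      linarith
    rw [norm_mul, norm_neg, Complex.norm_I, one_mul]
    exact norm_Gd_le u t' r (|t|+1) |u| ht'' le_rfl
  have key := hasDerivAt_integral_of_dominated_loc_of_deriv_le
    (F := fun t r => Gint u t r) (F' := fun t r => -Complex.I * Gd u t r) (x₀ := t)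
    (bound := fun r => ((1 + (|t| + 1)) ^ 2 + |u|) *
      masterFun 2 ((|t|+1)/2) (((|t| + 1) ^ 2 + |u|) / 2) (|u| * (|t| + 1) + (|t| + 1) ^ 3 / 3) r)
    (Metric.ball_mem_nhds _ one_pos) (Filter.Eventually.of_forall fun t' => aesm_Gint u t')
    (integrable_Gint u t) ((aesm_Gd u t).const_mul (-Complex.I))
    (Filter.Eventually.of_forall hbnd)
    ((masterFun_integrable 2 _ _ _).const_mul _)
    (Filter.Eventually.of_forall fun r t' _ => hasDerivAt_Gint_t u r t')
  obtain ⟨-, hd⟩ := key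
  have hz : ∫ r : ℝ, -Complex.I * Gd u t r = 0 := by
    rw [integral_const_mul, integral_Gd_eq_zero, mul_zero]
  rwa [hz] at hd

lemma integral_Gint_shift (u : ℝ) (M : ℝ) :
    ∫ r : ℝ, Gint u M r = ∫ r : ℝ, Gint u 0 r :=
  is_const_of_deriv_eq_zero
    (fun t => (hasDerivAt_integral_Gint u t).differentiableAt)
    (fun t => (hasDerivAt_integral_Gint u t).deriv) M 0

end AiryAux2

/-- for every `w ∈ ℂ`, `C_w` is differentiable on `ℝ` with
`C_w′(u) = Ai(u) − w·C_w(u)`. -/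
theorem CFun_hasDerivAt (w : ℂ) (u : ℝ) :
    HasDerivAt (CFun w) (Airy u - w * CFun w u) u := by
  set M := 2 + 2 * ‖w‖ with hM
  -- Step A: differentiation under the integral sign
  have hbnd : ∀ r : ℝ, ∀ y ∈ Metric.ball u 1,
      ‖Fd w y r‖ ≤ (1 + M) * masterFun 1 (M/2) ((M ^ 2 + (|u| + 1)) / 2)
        ((|u| + 1) * M + M ^ 3 / 3) r := by
    intro r y hy
    have hy' : |y| ≤ |u| + 1 := by
      rw [Metric.mem_ball, Real.dist_eq] at hy
      have := abs_sub_abs_le_abs_sub y u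
      linarith
    exact norm_Fd_le w y r (|u|+1) hy'
  have key := hasDerivAt_integral_of_dominated_loc_of_deriv_le
    (F := fun y r => Fint w y r) (F' := fun y r => Fd w y r) (x₀ := u)
    (bound := fun r => (1 + M) * masterFun 1 (M/2) ((M ^ 2 + (|u| + 1)) / 2) ((|u| + 1) * M + M ^ 3 / 3) r)
    (Metric.ball_mem_nhds _ one_pos) (Filter.Eventually.of_forall fun y => aesm_Fint w y)
    (integrable_Fint w u) (aesm_Fd w u)
    (Filter.Eventually.of_forall hbnd)
    ((masterFun_integrable 1 _ _ _).const_mul _)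
    (Filter.Eventually.of_forall fun r y _ => hasDerivAt_Fint w r y)
  obtain ⟨-, hd⟩ := key
  -- Step B: split the derivative integrand
  have hsplit : (fun r : ℝ => Fd w u r) = fun r : ℝ => Gint u M r - w * Fint w u r := by
    funext r
    have hne := pole_ne_zero w r
    rw [← hM] at hne
    unfold Fd Fint Gint
    rw [← hM]
    field_simp
    ring
  have hint1 : ∫ r : ℝ, Fd w u r = (∫ r : ℝ, Gint u M r) - w * ∫ r : ℝ, Fint w u r := by
    rw [hsplit, integral_sub (integrable_Gint u M) ((integrable_Fint w u).const_mul w),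
      integral_const_mul]
  -- Step C: contour shift
  have hshift := integral_Gint_shift u M
  -- assembly
  have hCeq : CFun w = fun y : ℝ => (1 / (2 * (Real.pi : ℂ))) * ∫ r : ℝ, Fint w y r := by
    funext y
    rfl
  have hAiry : Airy u = (1 / (2 * (Real.pi : ℂ))) * ∫ r : ℝ, Gint u 0 r := by
    unfold Airy Gint
    congr 1
    apply congrArg
    funext r
    ring_nf
  have hd2 := hd.const_mul ((1 : ℂ) / (2 * (Real.pi : ℂ)))
  rw [hCeq]
  refine hd2.congr_deriv ?_
  simp only []
  rw [hint1, hshift, hAiry]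
  ring
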